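/- For every h₁ > 0 and every k ∈ ℕ there exists a constant C_k > 0, depending only on k and h₁, such that for all real h ≥ h₁ and all positive integers j, j' one has |∂_h^k ( (j·tanh(h·j))^{1/2} − (j'·tanh(h·j'))^{1/2} )| ≤ C_k · |√j − √j'|. -/

import Mathlib

open scoped ContDiff
open Real Set Filter Topology

/-! ### tanh basics -/

lemma tanh_eq' (x : ℝ) : Real.tanh x = 1 - 2 / (Real.exp (2*x) + 1) := by
  have h1 : Real.exp x ≠ 0 := (Real.exp_pos x).ne'
  have h2 : Real.exp (2*x) = Real.exp x * Real.exp x := by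
    rw [← Real.exp_add]; ring_nf
  have h4 : Real.exp x + Real.exp (-x) ≠ 0 := by positivity
  have h5 : Real.exp (2*x) + 1 ≠ 0 := by positivity
  rw [Real.tanh_eq_sinh_div_cosh, Real.sinh_eq, Real.cosh_eq, Real.exp_neg] at *
  rw [h2] at h5 ⊢
  field_simp
  ring

lemma my_tanh_lt_one (x : ℝ) : Real.tanh x < 1 := by
  rw [tanh_eq']
  have : 0 < 2 / (Real.exp (2*x) + 1) := by positivity
  linarith

lemma my_tanh_pos {x : ℝ} (hx : 0 < x) : 0 < Real.tanh x := by
  rw [tanh_eq']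
  have h1 : 1 < Real.exp (2*x) := by
    have := Real.add_one_le_exp (2*x)
    linarith
  have h2 : (0:ℝ) < Real.exp (2*x) + 1 := by positivity
  have : 2 / (Real.exp (2*x) + 1) < 1 := by
    rw [div_lt_one h2]; linarith
  linarith

lemma my_tanh_mono {x y : ℝ} (hxy : x ≤ y) : Real.tanh x ≤ Real.tanh y := by
  rw [tanh_eq', tanh_eq']
  have h0 : (0:ℝ) < Real.exp (2*x) + 1 := by positivity
  have h1 : Real.exp (2*x) + 1 ≤ Real.exp (2*y) + 1 := by
    have := Real.exp_le_exp.2 (show 2*x ≤ 2*y by linarith)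
    linarith
  have := div_le_div_of_nonneg_left (by norm_num : (0:ℝ) ≤ 2) h0 h1
  linarith

lemma one_sub_tanh_le (x : ℝ) : 1 - Real.tanh x ≤ 2 * Real.exp (-(2*x)) := by
  rw [tanh_eq']
  have h0 : (0:ℝ) < Real.exp (2*x) + 1 := by positivity
  have h2 : Real.exp (-(2*x)) = (Real.exp (2*x))⁻¹ := by rw [Real.exp_neg]
  rw [h2]
  have h3 : 2 / (Real.exp (2*x) + 1) ≤ 2 / Real.exp (2*x) := by
    apply div_le_div_of_nonneg_left (by norm_num) (Real.exp_pos _)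
    linarith
  have h4 : 2 / Real.exp (2*x) = 2 * (Real.exp (2*x))⁻¹ := by ring
  linarith [h3, h4 ▸ h3]

lemma my_hasDerivAt_tanh (x : ℝ) : HasDerivAt Real.tanh (1 - Real.tanh x ^ 2) x := by
  have hc : Real.cosh x ≠ 0 := (Real.cosh_pos x).ne'
  have h := (Real.hasDerivAt_sinh x).div (Real.hasDerivAt_cosh x) hc
  have heq : Real.tanh = fun y => Real.sinh y / Real.cosh y :=
    funext fun y => Real.tanh_eq_sinh_div_cosh y
  have hval : 1 - Real.tanh x ^ 2
      = (Real.cosh x * Real.cosh x - Real.sinh x * Real.sinh x) / Real.cosh x ^ 2 := by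
    rw [Real.tanh_eq_sinh_div_cosh]
    have hid : Real.cosh x ^ 2 - Real.sinh x ^ 2 = 1 := Real.cosh_sq_sub_sinh_sq x
    field_simp
  rw [hval, heq]
  exact h

lemma my_contDiff_tanh : ContDiff ℝ ∞ Real.tanh := by
  have heq : Real.tanh = fun y => Real.sinh y / Real.cosh y :=
    funext fun y => Real.tanh_eq_sinh_div_cosh y
  rw [heq]
  exact Real.contDiff_sinh.div Real.contDiff_cosh (fun x => (Real.cosh_pos x).ne')

lemma hasDerivAt_tanh_comp (c t : ℝ) :
    HasDerivAt (fun s : ℝ => Real.tanh (s * c)) ((1 - Real.tanh (t*c)^2) * c) t := by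
  have := (my_hasDerivAt_tanh (t*c)).comp t (hasDerivAt_mul_const c); exact this

/-! ### smoothness of the frequency function -/

lemma contDiffOn_freq {c : ℝ} (hc : 0 < c) :
    ContDiffOn ℝ ∞ (fun t : ℝ => Real.sqrt (c * Real.tanh (t * c))) (Set.Ioi 0) := by
  intro t ht
  have ht' : (0:ℝ) < t := ht
  have hpos : 0 < c * Real.tanh (t * c) := mul_pos hc (my_tanh_pos (mul_pos ht' hc))
  have hinner : ContDiffAt ℝ ∞ (fun t : ℝ => c * Real.tanh (t * c)) t := by
    have : ContDiff ℝ ∞ (fun t : ℝ => c * Real.tanh (t * c)) :=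
      contDiff_const.mul (my_contDiff_tanh.comp (contDiff_id.mul contDiff_const))
    exact this.contDiffAt
  exact (hinner.sqrt hpos.ne').contDiffWithinAt

/-! ### representation of iterated derivatives -/

lemma freq_deriv_rep (k : ℕ) : ∃ F : ℝ → ℝ, ContDiffOn ℝ ∞ F (Set.Ioi 0) ∧
    ∀ c : ℝ, 0 < c → ∀ t : ℝ, 0 < t →
      iteratedDeriv (k+1) (fun t : ℝ => Real.sqrt (c * Real.tanh (t * c))) t
        = Real.sqrt c * c^(k+1) *
            ((1 - Real.tanh (t*c)^2) * F (Real.tanh (t*c))) := by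
  induction k with
  | zero =>
    refine ⟨fun x => 1 / (2 * Real.sqrt x), ?_, ?_⟩
    · intro x hx
      have hx0 : (0:ℝ) < x := hx
      exact (ContDiffAt.div contDiffAt_const
        (contDiffAt_const.mul (Real.contDiffAt_sqrt hx0.ne'))
        (by positivity)).contDiffWithinAt
    · intro c hc t ht
      have hTpos : 0 < Real.tanh (t*c) := my_tanh_pos (mul_pos ht hc)
      have hin : HasDerivAt (fun s : ℝ => c * Real.tanh (s * c))
          (c * ((1 - Real.tanh (t*c)^2) * c)) t := (hasDerivAt_tanh_comp c t).const_mul c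
      have h2 : HasDerivAt (fun s : ℝ => Real.sqrt (c * Real.tanh (s * c)))
          (c * ((1 - Real.tanh (t*c)^2) * c) / (2 * Real.sqrt (c * Real.tanh (t*c)))) t :=
        hin.sqrt (by positivity)
      rw [iteratedDeriv_one, h2.deriv, Real.sqrt_mul hc.le]
      have ha : Real.sqrt c ^ 2 = c := Real.sq_sqrt hc.le
      have hapos : 0 < Real.sqrt c := Real.sqrt_pos.2 hc
      have hbpos : 0 < Real.sqrt (Real.tanh (t*c)) := Real.sqrt_pos.2 hTpos
      beta_reduce
      set T := Real.tanh (t*c) with hT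
      set a := Real.sqrt c with haa
      set b := Real.sqrt T with hbb
      rw [← ha]
      field_simp
      ring
  | succ k ih =>
    obtain ⟨F, hF, hFeq⟩ := ih
    have hinf : ((⊤:ℕ∞) : WithTop ℕ∞) + 1 ≤ ((⊤:ℕ∞) : WithTop ℕ∞) := by
      norm_num
    have hFd : ContDiffOn ℝ ∞ (deriv F) (Set.Ioi 0) :=
      hF.deriv_of_isOpen isOpen_Ioi hinf
    refine ⟨fun x => -2*x*F x + (1-x^2) * deriv F x, ?_, ?_⟩
    · exact ((contDiffOn_const.mul contDiffOn_id).mul hF).add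
        ((contDiffOn_const.sub (contDiffOn_id.pow 2)).mul hFd)
    · intro c hc t ht
      have hmem : Set.Ioi (0:ℝ) ∈ 𝓝 t := isOpen_Ioi.mem_nhds ht
      have heq : iteratedDeriv (k+1) (fun t : ℝ => Real.sqrt (c * Real.tanh (t * c)))
          =ᶠ[𝓝 t] fun s => Real.sqrt c * c^(k+1) *
            ((1 - Real.tanh (s*c)^2) * F (Real.tanh (s*c))) := by
        filter_upwards [hmem] with s hs
        exact hFeq c hc s hs
      rw [show k+1+1 = (k+1)+1 from rfl, iteratedDeriv_succ, heq.deriv_eq]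
      have hTpos : 0 < Real.tanh (t*c) := my_tanh_pos (mul_pos ht hc)
      have hT := hasDerivAt_tanh_comp c t
      have hdF : HasDerivAt F (deriv F (Real.tanh (t*c))) (Real.tanh (t*c)) := by
        have : DifferentiableAt ℝ F (Real.tanh (t*c)) :=
          (hF.differentiableOn (by simp)).differentiableAt
            (isOpen_Ioi.mem_nhds hTpos)
        exact this.hasDerivAt
      have h1 : HasDerivAt (fun s : ℝ => 1 - Real.tanh (s*c)^2)
          (-(2 * Real.tanh (t*c) * ((1 - Real.tanh (t*c)^2) * c))) t := by
        simpa using (hT.pow 2).const_sub 1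
      have h2 : HasDerivAt (fun s : ℝ => F (Real.tanh (s*c)))
          (deriv F (Real.tanh (t*c)) * ((1 - Real.tanh (t*c)^2) * c)) t :=
        hdF.comp t hT
      have h3 : HasDerivAt (fun s : ℝ => Real.sqrt c * c^(k+1) *
          ((1 - Real.tanh (s*c)^2) * F (Real.tanh (s*c)))) _ t := (h1.mul h2).const_mul (Real.sqrt c * c^(k+1))
      rw [h3.deriv]
      ring

/-! ### auxiliary inequalities -/

lemma iteratedDeriv_on_open (n : ℕ) (f : ℝ → ℝ) {x : ℝ} (hx : x ∈ Set.Ioi (0:ℝ)) :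
    iteratedDerivWithin n f (Set.Ioi 0) x = iteratedDeriv n f x := by
  rw [iteratedDerivWithin_eq_iteratedFDerivWithin, iteratedDeriv_eq_iteratedFDeriv,
    iteratedFDerivWithin_of_isOpen n isOpen_Ioi hx]

lemma iteratedDeriv_sub_open (n : ℕ) {f g : ℝ → ℝ}
    (hf : ContDiffOn ℝ ∞ f (Set.Ioi 0)) (hg : ContDiffOn ℝ ∞ g (Set.Ioi 0))
    {x : ℝ} (hx : x ∈ Set.Ioi (0:ℝ)) :
    iteratedDeriv n (fun t => f t - g t) x = iteratedDeriv n f x - iteratedDeriv n g x := by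
  rw [← iteratedDeriv_on_open n _ hx, ← iteratedDeriv_on_open n f hx,
    ← iteratedDeriv_on_open n g hx,
    show (fun t => f t - g t) = f - g from rfl,
    iteratedDerivWithin_sub hx isOpen_Ioi.uniqueDiffOn ((hf x hx).of_le (by exact_mod_cast le_top))
      ((hg x hx).of_le (by exact_mod_cast le_top))]

lemma poly_mul_exp_le (n : ℕ) {c x : ℝ} (hc : 0 < c) (hx : 0 ≤ x) :
    x ^ n * Real.exp (-(c*x)) ≤ (n.factorial : ℝ) / c ^ n := by
  have key : (c*x)^n / (n.factorial : ℝ) ≤ Real.exp (c*x) :=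
    Real.pow_div_factorial_le_exp (x := c*x) (by positivity) n
  have hfac : (0:ℝ) < (n.factorial : ℝ) := by exact_mod_cast n.factorial_pos
  have hcn : (0:ℝ) < c ^ n := by positivity
  have hexp : (0:ℝ) < Real.exp (c*x) := Real.exp_pos _
  rw [mul_pow, div_le_iff₀ hfac] at key
  rw [Real.exp_neg, div_eq_mul_inv]
  have h1 : x ^ n * (Real.exp (c*x))⁻¹ * (c ^ n * Real.exp (c*x))
      = c ^ n * x ^ n * (Real.exp (c*x) * (Real.exp (c*x))⁻¹) := by ring
  have h2 : Real.exp (c*x) * (Real.exp (c*x))⁻¹ = 1 := mul_inv_cancel₀ hexp.ne'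
  have h3 : x ^ n * (Real.exp (c*x))⁻¹ * (c ^ n * Real.exp (c*x)) ≤
      (n.factorial : ℝ) * (c ^ n)⁻¹ * (c ^ n * Real.exp (c*x)) ↔ _ := Iff.rfl
  rw [← mul_le_mul_iff_of_pos_right (show (0:ℝ) < c ^ n * Real.exp (c*x) by positivity)]
  rw [h1, h2]
  have h4 : (n.factorial : ℝ) * (c ^ n)⁻¹ * (c ^ n * Real.exp (c*x))
      = ((c ^ n) * (c ^ n)⁻¹) * ((n.factorial : ℝ) * Real.exp (c*x)) := by ring
  rw [h4, mul_inv_cancel₀ hcn.ne', one_mul, mul_one]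
  linarith [key]

lemma sqrt_gap {j j' : ℕ} (hj : 1 ≤ j) (hjj : j < j') :
    1 / (3 * Real.sqrt j) ≤ Real.sqrt j' - Real.sqrt j := by
  have h1 : (1:ℝ) ≤ (j:ℝ) := by exact_mod_cast hj
  have hsucc : ((j:ℝ) + 1) ≤ (j' : ℝ) := by exact_mod_cast hjj
  have hb' : Real.sqrt ((j:ℝ)+1) ≤ Real.sqrt j' := Real.sqrt_le_sqrt hsucc
  have ha2 : Real.sqrt (j:ℝ) ^ 2 = (j:ℝ) := Real.sq_sqrt (by linarith)
  have hb2 : Real.sqrt ((j:ℝ)+1) ^ 2 = (j:ℝ)+1 := Real.sq_sqrt (by linarith)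
  have ha1 : 1 ≤ Real.sqrt (j:ℝ) := by
    rw [show (1:ℝ) = Real.sqrt 1 by simp]
    exact Real.sqrt_le_sqrt h1
  have hb0 : 0 ≤ Real.sqrt ((j:ℝ)+1) := Real.sqrt_nonneg _
  have hba : Real.sqrt (j:ℝ) ≤ Real.sqrt ((j:ℝ)+1) := Real.sqrt_le_sqrt (by linarith)
  have hb2a : Real.sqrt ((j:ℝ)+1) ≤ 2 * Real.sqrt (j:ℝ) := by
    have h5 : Real.sqrt ((j:ℝ)+1) ≤ Real.sqrt (4*(j:ℝ)) := Real.sqrt_le_sqrt (by linarith)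
    have h6 : Real.sqrt (4*(j:ℝ)) = 2 * Real.sqrt (j:ℝ) := by
      rw [show (4:ℝ)*(j:ℝ) = 2^2 * (j:ℝ) by ring, Real.sqrt_mul (by positivity),
        Real.sqrt_sq (by norm_num)]
    linarith [h6 ▸ h5]
  set a := Real.sqrt (j:ℝ)
  set b := Real.sqrt ((j:ℝ)+1)
  have hkey : 1/(3*a) ≤ b - a := by
    rw [div_le_iff₀ (by positivity)]
    nlinarith [mul_nonneg (sub_nonneg.2 hba) (sub_nonneg.2 hb2a)]
  linarith

lemma gap_ge {j j' : ℕ} (hj : 1 ≤ j) (hj' : 1 ≤ j') (hne : j ≠ j') :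
    1 / (3 * Real.sqrt j) ≤ |Real.sqrt j - Real.sqrt j'| := by
  have hj0 : (0:ℝ) < Real.sqrt j := Real.sqrt_pos.2 (by exact_mod_cast hj)
  have hj'0 : (0:ℝ) < Real.sqrt j' := Real.sqrt_pos.2 (by exact_mod_cast hj')
  rcases lt_or_gt_of_ne hne with hlt | hgt
  · have h := sqrt_gap hj hlt
    have hpos : 0 < 1/(3*Real.sqrt j) := by positivity
    rw [abs_sub_comm, abs_of_nonneg (by linarith)]
    linarith
  · have h := sqrt_gap hj' hgt
    have h2 : 1/(3*Real.sqrt j) ≤ 1/(3*Real.sqrt j') := by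
      apply div_le_div_of_nonneg_left (by norm_num) (by positivity)
      have : Real.sqrt j' ≤ Real.sqrt j := Real.sqrt_le_sqrt (by exact_mod_cast hgt.le)
      linarith
    have hpos : 0 < 1/(3*Real.sqrt j') := by positivity
    rw [abs_of_nonneg (by linarith)]
    linarith

/-! ### single-frequency bound for derivatives of order ≥ 1 -/

lemma single_bound (h₁ : ℝ) (hh₁ : 0 < h₁) (k : ℕ) :
    ∃ D : ℝ, 0 < D ∧ ∀ h : ℝ, h₁ ≤ h → ∀ c : ℝ, 1 ≤ c →
      |iteratedDeriv (k+1) (fun t : ℝ => Real.sqrt (c * Real.tanh (t * c))) h|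
        ≤ D * ((c ^ (k+2)) * Real.exp (-(2*h₁*c))) := by
  obtain ⟨F, hF, hFeq⟩ := freq_deriv_rep k
  have hsub : Set.Icc (Real.tanh h₁) 1 ⊆ Set.Ioi 0 :=
    fun x hx => lt_of_lt_of_le (my_tanh_pos hh₁) hx.1
  have hcont : ContinuousOn F (Set.Icc (Real.tanh h₁) 1) := (hF.continuousOn).mono hsub
  obtain ⟨M, hM⟩ := (isCompact_Icc).exists_bound_of_continuousOn hcont
  refine ⟨4*(M+1), ?_, ?_⟩
  · have hMtanh : ‖F (Real.tanh h₁)‖ ≤ M := hM _ ⟨le_refl _, (my_tanh_lt_one h₁).le⟩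
    have : (0:ℝ) ≤ M := le_trans (norm_nonneg _) hMtanh
    linarith
  · intro h hh c hc
    have hc0 : (0:ℝ) < c := by linarith
    have hh0 : (0:ℝ) < h := by linarith
    have hhc : h₁ ≤ h * c := by
      calc h₁ = h₁ * 1 := by ring
      _ ≤ h * c := by
        apply mul_le_mul hh hc (by norm_num) hh0.le
    set T := Real.tanh (h*c) with hTdef
    have hT1 : T < 1 := my_tanh_lt_one _
    have hT0 : 0 < T := my_tanh_pos (by linarith)
    have hTlow : Real.tanh h₁ ≤ T := my_tanh_mono hhc
    have hFM : ‖F T‖ ≤ M := hM _ ⟨hTlow, hT1.le⟩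
    have habsF : |F T| ≤ M + 1 := by
      rw [← Real.norm_eq_abs]; linarith
    rw [hFeq c hc0 h hh0]
    have hsqc : Real.sqrt c ≤ c := by
      calc Real.sqrt c ≤ Real.sqrt (c*c) := Real.sqrt_le_sqrt (by nlinarith)
        _ = c := Real.sqrt_mul_self (by linarith)
    have hsqc0 : 0 ≤ Real.sqrt c := Real.sqrt_nonneg _
    have hTsq : 0 ≤ 1 - T^2 := by nlinarith
    have hexpb : 1 - T^2 ≤ 4 * Real.exp (-(2*h₁*c)) := by
      have h1T : 1 - T ≤ 2 * Real.exp (-(2*(h*c))) := one_sub_tanh_le (h*c)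
      have hmono : Real.exp (-(2*(h*c))) ≤ Real.exp (-(2*h₁*c)) := by
        apply Real.exp_le_exp.2
        have : h₁ * c ≤ h * c := mul_le_mul_of_nonneg_right hh hc0.le
        linarith
      nlinarith [Real.exp_pos (-(2*(h*c)))]
    have hM1 : (0:ℝ) ≤ M + 1 := by
      have : (0:ℝ) ≤ M := le_trans (norm_nonneg _) hFM
      linarith
    calc |Real.sqrt c * c ^ (k + 1) * ((1 - T ^ 2) * F T)|
        = Real.sqrt c * c ^ (k+1) * ((1 - T^2) * |F T|) := by
          rw [abs_mul, abs_mul, abs_mul, abs_of_nonneg hsqc0,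
            abs_of_nonneg (by positivity : (0:ℝ) ≤ c^(k+1)), abs_of_nonneg hTsq]
      _ ≤ c * c ^ (k+1) * ((4 * Real.exp (-(2*h₁*c))) * (M+1)) := by
          apply mul_le_mul
          · exact mul_le_mul_of_nonneg_right hsqc (by positivity)
          · apply mul_le_mul hexpb habsF (abs_nonneg _) (by positivity)
          · exact mul_nonneg hTsq (abs_nonneg _)
          · positivity
      _ = 4*(M+1) * ((c ^ (k+2)) * Real.exp (-(2*h₁*c))) := by ring

/-! ### the zeroth order bound -/

lemma freq_bound_zero (h₁ : ℝ) (hh₁ : 0 < h₁) {h : ℝ} (hh : h₁ ≤ h)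
    {j j' : ℕ} (hj : 1 ≤ j) (hlt : j < j') :
    |Real.sqrt (j * Real.tanh (h * j)) - Real.sqrt (j' * Real.tanh (h * j'))|
      ≤ (1 + 3/h₁) * |Real.sqrt j - Real.sqrt j'| := by
  have hh0 : (0:ℝ) < h := lt_of_lt_of_le hh₁ hh
  have hj0 : (0:ℝ) < (j:ℝ) := by exact_mod_cast hj
  have hj'0 : (0:ℝ) < (j':ℝ) := by exact_mod_cast Nat.zero_lt_of_lt hlt
  have hjj' : (j:ℝ) ≤ (j':ℝ) := by exact_mod_cast hlt.le
  set a := Real.tanh (h * (j:ℝ)) with hadef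
  set b := Real.tanh (h * (j':ℝ)) with hbdef
  have ha0 : 0 < a := my_tanh_pos (by positivity)
  have hb0 : 0 < b := my_tanh_pos (by positivity)
  have ha1 : a < 1 := my_tanh_lt_one _
  have hb1 : b < 1 := my_tanh_lt_one _
  have hab : a ≤ b := my_tanh_mono (by nlinarith)
  have hsplit : Real.sqrt (j * a) - Real.sqrt (j' * b)
      = (Real.sqrt j - Real.sqrt j') * Real.sqrt b
        + Real.sqrt j * (Real.sqrt a - Real.sqrt b) := by
    rw [Real.sqrt_mul hj0.le, Real.sqrt_mul hj'0.le]
    ring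
  have hsab : Real.sqrt a ≤ Real.sqrt b := Real.sqrt_le_sqrt hab
  have hsb1 : Real.sqrt b ≤ 1 := by
    calc Real.sqrt b ≤ Real.sqrt 1 := Real.sqrt_le_sqrt hb1.le
      _ = 1 := Real.sqrt_one
  have hsa_ge : a ≤ Real.sqrt a := by
    have h1 : a = Real.sqrt (a * a) := (Real.sqrt_mul_self ha0.le).symm
    have h2 : Real.sqrt (a * a) ≤ Real.sqrt a := Real.sqrt_le_sqrt (by nlinarith)
    linarith
  have hgap : Real.sqrt b - Real.sqrt a ≤ 2 * Real.exp (-(2*h₁*(j:ℝ))) := by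
    have h1 : 1 - a ≤ 2 * Real.exp (-(2*(h*(j:ℝ)))) := one_sub_tanh_le _
    have hmono : Real.exp (-(2*(h*(j:ℝ)))) ≤ Real.exp (-(2*h₁*(j:ℝ))) := by
      apply Real.exp_le_exp.2
      have : h₁ * (j:ℝ) ≤ h * (j:ℝ) := mul_le_mul_of_nonneg_right hh hj0.le
      linarith
    linarith
  have hpoly : (j:ℝ) * Real.exp (-(2*h₁*(j:ℝ))) ≤ 1 / (2*h₁) := by
    have := poly_mul_exp_le 1 (show (0:ℝ) < 2*h₁ by linarith) hj0.le
    simpa using this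
  have hsj0 : 0 < Real.sqrt (j:ℝ) := Real.sqrt_pos.2 hj0
  have hsqj : Real.sqrt (j:ℝ) * Real.sqrt (j:ℝ) = (j:ℝ) := Real.mul_self_sqrt hj0.le
  -- second term bound
  have hterm2 : Real.sqrt j * (Real.sqrt b - Real.sqrt a) ≤ (3/h₁) * (1/(3*Real.sqrt j)) := by
    have e1 : Real.sqrt j * (Real.sqrt b - Real.sqrt a)
        ≤ Real.sqrt j * (2 * Real.exp (-(2*h₁*(j:ℝ)))) :=
      mul_le_mul_of_nonneg_left hgap hsj0.le
    have e2 : Real.sqrt j * (2 * Real.exp (-(2*h₁*(j:ℝ)))) ≤ (3/h₁) * (1/(3*Real.sqrt j)) := by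
      rw [mul_one_div, le_div_iff₀ (by positivity), le_div_iff₀ hh₁]
      set E := Real.exp (-(2*h₁*(j:ℝ))) with hE
      have hE0 : 0 < E := Real.exp_pos _
      have hpoly' : (j:ℝ) * E * (2*h₁) ≤ 1 := by
        rw [← le_div_iff₀ (by positivity : (0:ℝ) < 2*h₁)]
        exact hpoly
      rw [← hsqj] at hpoly'
      nlinarith [hpoly']
    linarith
  have hgapge : 1 / (3*Real.sqrt j) ≤ Real.sqrt j' - Real.sqrt j := sqrt_gap hj hlt
  have hDelta : |Real.sqrt (j:ℝ) - Real.sqrt (j':ℝ)| = Real.sqrt j' - Real.sqrt j := by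
    rw [abs_sub_comm, abs_of_nonneg (by linarith [Real.sqrt_le_sqrt hjj'])]
  rw [hsplit, hDelta]
  have habs1 : |(Real.sqrt j - Real.sqrt j') * Real.sqrt b| ≤ Real.sqrt j' - Real.sqrt j := by
    rw [abs_mul, abs_sub_comm, abs_of_nonneg (by linarith [Real.sqrt_le_sqrt hjj']),
      abs_of_nonneg (Real.sqrt_nonneg _)]
    nlinarith [Real.sqrt_le_sqrt hjj', Real.sqrt_nonneg (b:ℝ)]
  have habs2 : |Real.sqrt j * (Real.sqrt a - Real.sqrt b)| ≤ (3/h₁) * (Real.sqrt j' - Real.sqrt j) := by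
    rw [abs_mul, abs_of_nonneg hsj0.le, abs_sub_comm, abs_of_nonneg (by linarith)]
    have h3 : (0:ℝ) < 3/h₁ := by positivity
    calc Real.sqrt j * (Real.sqrt b - Real.sqrt a) ≤ (3/h₁) * (1/(3*Real.sqrt j)) := hterm2
      _ ≤ (3/h₁) * (Real.sqrt j' - Real.sqrt j) := by
          apply mul_le_mul_of_nonneg_left hgapge h3.le
  calc |(Real.sqrt j - Real.sqrt j') * Real.sqrt b + Real.sqrt j * (Real.sqrt a - Real.sqrt b)|
      ≤ |(Real.sqrt j - Real.sqrt j') * Real.sqrt b| + |Real.sqrt j * (Real.sqrt a - Real.sqrt b)| :=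
        abs_add_le _ _
    _ ≤ (Real.sqrt j' - Real.sqrt j) + (3/h₁) * (Real.sqrt j' - Real.sqrt j) := by linarith
    _ = (1 + 3/h₁) * (Real.sqrt j' - Real.sqrt j) := by ring

/-- For every h₁ > 0 and k ∈ ℕ there is C_k > 0 (depending only on k and h₁) such that
|∂_h^k (√(j tanh(h j)) − √(j' tanh(h j')))| ≤ C_k |√j − √j'| for all h ≥ h₁ and j, j' ≥ 1. -/
theorem freq_difference_derivatives_bound (h₁ : ℝ) (hh₁ : 0 < h₁) (k : ℕ) :
    ∃ C : ℝ, 0 < C ∧ ∀ h : ℝ, h₁ ≤ h → ∀ j j' : ℕ, 1 ≤ j → 1 ≤ j' →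
      |iteratedDeriv k
          (fun t : ℝ => Real.sqrt ((j : ℝ) * Real.tanh (t * (j : ℝ))) -
            Real.sqrt ((j' : ℝ) * Real.tanh (t * (j' : ℝ)))) h| ≤
        C * |Real.sqrt j - Real.sqrt j'| := by
  cases k with
  | zero =>
    refine ⟨1 + 3/h₁, by positivity, ?_⟩
    intro h hh j j' hj hj'
    rw [iteratedDeriv_zero]
    rcases lt_trichotomy j j' with hlt | heq | hgt
    · exact freq_bound_zero h₁ hh₁ hh hj hlt
    · subst heq
      simp
    · have := freq_bound_zero h₁ hh₁ hh hj' hgt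
      rw [abs_sub_comm, abs_sub_comm (Real.sqrt j) (Real.sqrt j')]
      exact this
  | succ k =>
    obtain ⟨D, hD, hDb⟩ := single_bound h₁ hh₁ k
    set K : ℝ := 3 * ((k+3).factorial / (2*h₁)^(k+3)) with hK
    have hKpos : 0 < K := by
      rw [hK]
      have : (0:ℝ) < ((k+3).factorial : ℝ) := by exact_mod_cast (k+3).factorial_pos
      positivity
    refine ⟨2*D*K + 1, by positivity, ?_⟩
    intro h hh j j' hj hj'
    have hh0 : (0:ℝ) < h := lt_of_lt_of_le hh₁ hh
    have hmem : h ∈ Set.Ioi (0:ℝ) := hh0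
    have hj0 : (0:ℝ) < (j:ℝ) := by exact_mod_cast hj
    have hj'0 : (0:ℝ) < (j':ℝ) := by exact_mod_cast hj'
    rw [iteratedDeriv_sub_open (k+1) (contDiffOn_freq hj0) (contDiffOn_freq hj'0) hmem]
    rcases eq_or_ne j j' with rfl | hne
    · simp
    · -- key per-index bound
      have key : ∀ i : ℕ, 1 ≤ i →
          D * (((i:ℝ)) ^ (k+2) * Real.exp (-(2*h₁*(i:ℝ)))) ≤ D * K * (1/(3*Real.sqrt i)) := by
        intro i hi
        have hi0 : (0:ℝ) < (i:ℝ) := by exact_mod_cast hi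
        have hi1 : (1:ℝ) ≤ (i:ℝ) := by exact_mod_cast hi
        have hsi0 : 0 < Real.sqrt (i:ℝ) := Real.sqrt_pos.2 hi0
        have hsqi : Real.sqrt (i:ℝ) * Real.sqrt (i:ℝ) = (i:ℝ) := Real.mul_self_sqrt hi0.le
        have hsile : Real.sqrt (i:ℝ) ≤ (i:ℝ) := by
          calc Real.sqrt (i:ℝ) ≤ Real.sqrt ((i:ℝ)*(i:ℝ)) := Real.sqrt_le_sqrt (by nlinarith)
            _ = (i:ℝ) := Real.sqrt_mul_self hi0.le
        have hpoly : (i:ℝ)^(k+3) * Real.exp (-(2*h₁*(i:ℝ))) ≤ ((k+3).factorial : ℝ) / (2*h₁)^(k+3) :=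
          poly_mul_exp_le (k+3) (by positivity) hi0.le
        have hmain : (i:ℝ)^(k+2) * Real.exp (-(2*h₁*(i:ℝ))) ≤ K * (1/(3*Real.sqrt i)) := by
          rw [mul_one_div, le_div_iff₀ (by positivity)]
          set E := Real.exp (-(2*h₁*(i:ℝ))) with hE
          have hE0 : 0 < E := Real.exp_pos _
          have step1 : (i:ℝ)^(k+2) * E * (3*Real.sqrt i) ≤ 3 * ((i:ℝ)^(k+2) * (i:ℝ) * E) := by
            have h1 : (i:ℝ)^(k+2) * E * Real.sqrt i ≤ (i:ℝ)^(k+2) * E * (i:ℝ) :=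
              mul_le_mul_of_nonneg_left hsile (by positivity)
            nlinarith [h1]
          have step2 : (i:ℝ)^(k+2) * (i:ℝ) * E = (i:ℝ)^(k+3) * E := by
            rw [← pow_succ]
          calc (i:ℝ)^(k+2) * E * (3*Real.sqrt i) ≤ 3 * ((i:ℝ)^(k+2) * (i:ℝ) * E) := step1
            _ = 3 * ((i:ℝ)^(k+3) * E) := by rw [step2]
            _ ≤ 3 * (((k+3).factorial : ℝ) / (2*h₁)^(k+3)) := by
                linarith [hpoly]
            _ = K := by rw [hK]
        calc D * (((i:ℝ)) ^ (k+2) * Real.exp (-(2*h₁*(i:ℝ))))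
            ≤ D * (K * (1/(3*Real.sqrt i))) := mul_le_mul_of_nonneg_left hmain hD.le
          _ = D * K * (1/(3*Real.sqrt i)) := by ring
      have hgapj : 1 / (3*Real.sqrt j) ≤ |Real.sqrt j - Real.sqrt j'| := gap_ge hj hj' hne
      have hgapj' : 1 / (3*Real.sqrt j') ≤ |Real.sqrt j - Real.sqrt j'| := by
        have := gap_ge hj' hj (Ne.symm hne)
        rw [abs_sub_comm] at this
        exact this
      have hbj := hDb h hh (j:ℝ) (by exact_mod_cast hj)
      have hbj' := hDb h hh (j':ℝ) (by exact_mod_cast hj')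
      have htermj : |iteratedDeriv (k+1) (fun t : ℝ => Real.sqrt ((j:ℝ) * Real.tanh (t * (j:ℝ)))) h|
          ≤ D * K * |Real.sqrt j - Real.sqrt j'| := by
        calc |iteratedDeriv (k+1) (fun t : ℝ => Real.sqrt ((j:ℝ) * Real.tanh (t * (j:ℝ)))) h|
            ≤ D * (((j:ℝ)) ^ (k+2) * Real.exp (-(2*h₁*(j:ℝ)))) := hbj
          _ ≤ D * K * (1/(3*Real.sqrt j)) := key j hj
          _ ≤ D * K * |Real.sqrt j - Real.sqrt j'| :=
              mul_le_mul_of_nonneg_left hgapj (by positivity)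
      have htermj' : |iteratedDeriv (k+1) (fun t : ℝ => Real.sqrt ((j':ℝ) * Real.tanh (t * (j':ℝ)))) h|
          ≤ D * K * |Real.sqrt j - Real.sqrt j'| := by
        calc |iteratedDeriv (k+1) (fun t : ℝ => Real.sqrt ((j':ℝ) * Real.tanh (t * (j':ℝ)))) h|
            ≤ D * (((j':ℝ)) ^ (k+2) * Real.exp (-(2*h₁*(j':ℝ)))) := hbj'
          _ ≤ D * K * (1/(3*Real.sqrt j')) := key j' hj'
          _ ≤ D * K * |Real.sqrt j - Real.sqrt j'| :=
              mul_le_mul_of_nonneg_left hgapj' (by positivity)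
      calc |iteratedDeriv (k+1) (fun t : ℝ => Real.sqrt ((j:ℝ) * Real.tanh (t * (j:ℝ)))) h
            - iteratedDeriv (k+1) (fun t : ℝ => Real.sqrt ((j':ℝ) * Real.tanh (t * (j':ℝ)))) h|
          ≤ |iteratedDeriv (k+1) (fun t : ℝ => Real.sqrt ((j:ℝ) * Real.tanh (t * (j:ℝ)))) h|
            + |iteratedDeriv (k+1) (fun t : ℝ => Real.sqrt ((j':ℝ) * Real.tanh (t * (j':ℝ)))) h| :=
            abs_sub _ _
        _ ≤ D * K * |Real.sqrt j - Real.sqrt j'| + D * K * |Real.sqrt j - Real.sqrt j'| := by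
            linarith
        _ ≤ (2*D*K + 1) * |Real.sqrt j - Real.sqrt j'| := by
            have : (0:ℝ) ≤ |Real.sqrt j - Real.sqrt j'| := abs_nonneg _
            nlinarith
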